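/- arXiv:2106.04340 — 2 statements merged into one kernel-verified Lean document; each statement's English description precedes it below -/
import Mathlib

section
/- Suppose every model interpolant produced by a solver is drawn from a fixed finite set S of formulas. Then there is no infinite model interpolation sequence: any sequence of formulas (I_k) and models (M_k) such that each M_k satisfies ⋀_{i<k} I_i, each M_k falsifies A, and each I_k is implied by A and false in M_k, must be finite. -/
theorem no_infinite_model_interpolation_sequence {Model : Type*}
    (A : Model → Prop) (S : Set (Model → Prop)) (hS : S.Finite)
    (I : ℕ → Model → Prop) (M : ℕ → Model)
    (hmem : ∀ k, I k ∈ S)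
    (h1 : ∀ k, ∀ i < k, I i (M k))
    (h2 : ∀ k, ¬ A (M k))
    (h3 : ∀ k, (∀ N, A N → I k N) ∧ ¬ I k (M k)) :
    False := by
  have inj : Function.Injective I := by
    intro i j hij
    by_contra hne
    rcases Nat.lt_or_ge i j with h | h
    · exact (h3 j).2 (hij ▸ h1 j i h)
    · have : i > j := lt_of_le_of_ne h (Ne.symm hne)
      exact (h3 i).2 (hij ▸ h1 i j this)
  exact Set.not_infinite.mpr hS (Set.infinite_of_injective_forall_mem inj hmem)
end

section
/- Sign conditions on a univariate polynomial and all its derivatives determine the position relative to a root: let f : ℝ[X] have degree m, let α be a real root of f, and let β > α be a point with f(x) ≠ 0 for all x ∈ (α, ∞). If a real number x satisfies sgn(f^{(i)}(x)) = sgn(f^{(i)}(β)) for all 0 ≤ i < m, and f is monic, then x > α. -/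
open Polynomial

private lemma pos_of_sign_eq_one {a : ℝ} (h : Real.sign a = 1) : 0 < a := by
  rcases lt_trichotomy a 0 with h1 | h1 | h1
  · rw [Real.sign_of_neg h1] at h; norm_num at h
  · rw [h1, Real.sign_zero] at h; norm_num at h
  · exact h1

private lemma neg_of_sign_eq_neg_one {a : ℝ} (h : Real.sign a = -1) : a < 0 := by
  rcases lt_trichotomy a 0 with h1 | h1 | h1
  · exact h1
  · rw [h1, Real.sign_zero] at h; norm_num at h
  · rw [Real.sign_of_pos h1] at h; norm_num at h

private lemma thom_key : ∀ n : ℕ, ∀ f : Polynomial ℝ, f.natDegree ≤ n → ∀ x z : ℝ, x ≤ z →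
    (∀ i, Real.sign ((Polynomial.derivative^[i] f).eval x)
        = Real.sign ((Polynomial.derivative^[i] f).eval z)) →
    ∀ y, x ≤ y → y ≤ z → Real.sign (f.eval y) = Real.sign (f.eval z) := by
  intro n
  induction n with
  | zero =>
    intro f hf x z _ _ y _ _
    rw [Polynomial.eq_C_of_natDegree_eq_zero (Nat.le_zero.mp hf)]
    simp
  | succ n ih =>
    intro f hf x z hxz hsgn y hxy hyz
    rcases eq_or_lt_of_le hxz with rfl | hxz'
    · have : y = x := le_antisymm hyz hxy
      rw [this]
    set g := Polynomial.derivative f with hg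
    have hgdeg : g.natDegree ≤ n := by
      rw [hg]
      have := Polynomial.natDegree_derivative_le f
      omega
    have hsg : ∀ i, Real.sign ((Polynomial.derivative^[i] g).eval x)
        = Real.sign ((Polynomial.derivative^[i] g).eval z) := by
      intro i
      have := hsgn (i + 1)
      rwa [Function.iterate_succ_apply] at this
    have hkey := ih g hgdeg x z hxz hsg
    -- g has constant sign on [x,z]
    rcases lt_trichotomy (g.eval z) 0 with hgz | hgz | hgz
    · -- g < 0 on [x,z]: f strictly anti
      have hgneg : ∀ t, x ≤ t → t ≤ z → g.eval t < 0 := fun t h1 h2 =>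
        neg_of_sign_eq_neg_one ((hkey t h1 h2).trans (Real.sign_of_neg hgz))
      have hanti : StrictAntiOn (fun t => f.eval t) (Set.Icc x z) := by
        apply strictAntiOn_of_deriv_neg (convex_Icc x z) (f.continuousOn)
        intro t ht
        rw [interior_Icc] at ht
        rw [Polynomial.deriv]
        exact hgneg t ht.1.le ht.2.le
      have hmem : ∀ t, x ≤ t → t ≤ z → t ∈ Set.Icc x z := fun t h1 h2 => ⟨h1, h2⟩
      have h0 := hsgn 0
      simp only [Function.iterate_zero, id] at h0
      rcases lt_trichotomy (f.eval z) 0 with hfz | hfz | hfz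
      · -- f x also negative; f y ≤ f x < 0? no: anti means f y ≥ f z... careful
        -- anti: x ≤ y ≤ z gives f y ≥ f z, and f y ≤ f x. f x sign = sign f z = -1 so f x < 0.
        have hfx : f.eval x < 0 := neg_of_sign_eq_neg_one (h0.trans (Real.sign_of_neg hfz))
        have : f.eval y ≤ f.eval x := hanti.antitoneOn (hmem x le_rfl hxz) (hmem y hxy hyz) hxy
        rw [Real.sign_of_neg (lt_of_le_of_lt this hfx), Real.sign_of_neg hfz]
      · -- f z = 0, f x = 0, strict anti contradiction since x < z
        have hfx : f.eval x = 0 := Real.sign_eq_zero_iff.mp (h0.trans (by rw [hfz, Real.sign_zero]))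
        have := hanti (hmem x le_rfl hxz) (hmem z hxz le_rfl) hxz'
        beta_reduce at this
        rw [hfx, hfz] at this
        exact absurd this (lt_irrefl 0)
      · have : f.eval z ≤ f.eval y := hanti.antitoneOn (hmem y hxy hyz) (hmem z hxz le_rfl) hyz
        rw [Real.sign_of_pos (lt_of_lt_of_le hfz this), Real.sign_of_pos hfz]
    · -- g z = 0 : g vanishes on [x,z], infinite set, so g = 0, f constant
      have hgzero : ∀ t, x ≤ t → t ≤ z → g.eval t = 0 := fun t h1 h2 =>
        Real.sign_eq_zero_iff.mp ((hkey t h1 h2).trans (by rw [hgz, Real.sign_zero]))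
      have hg0 : g = 0 := by
        apply Polynomial.eq_zero_of_infinite_isRoot
        apply Set.Infinite.mono (s := Set.Icc x z)
        · intro t ht
          exact hgzero t ht.1 ht.2
        · exact Set.Icc_infinite hxz'
      have := Polynomial.eq_C_of_derivative_eq_zero hg0
      rw [this]
      simp
    · have hgpos : ∀ t, x ≤ t → t ≤ z → 0 < g.eval t := fun t h1 h2 =>
        pos_of_sign_eq_one ((hkey t h1 h2).trans (Real.sign_of_pos hgz))
      have hmono : StrictMonoOn (fun t => f.eval t) (Set.Icc x z) := by
        apply strictMonoOn_of_deriv_pos (convex_Icc x z) (f.continuousOn)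
        intro t ht
        rw [interior_Icc] at ht
        rw [Polynomial.deriv]
        exact hgpos t ht.1.le ht.2.le
      have hmem : ∀ t, x ≤ t → t ≤ z → t ∈ Set.Icc x z := fun t h1 h2 => ⟨h1, h2⟩
      have h0 := hsgn 0
      simp only [Function.iterate_zero, id] at h0
      rcases lt_trichotomy (f.eval z) 0 with hfz | hfz | hfz
      · have : f.eval y ≤ f.eval z := hmono.monotoneOn (hmem y hxy hyz) (hmem z hxz le_rfl) hyz
        rw [Real.sign_of_neg (lt_of_le_of_lt this hfz), Real.sign_of_neg hfz]
      · have hfx : f.eval x = 0 := Real.sign_eq_zero_iff.mp (h0.trans (by rw [hfz, Real.sign_zero]))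
        have := hmono (hmem x le_rfl hxz) (hmem z hxz le_rfl) hxz'
        beta_reduce at this
        rw [hfx, hfz] at this
        exact absurd this (lt_irrefl 0)
      · have hfx : 0 < f.eval x := pos_of_sign_eq_one (h0.trans (Real.sign_of_pos hfz))
        have : f.eval x ≤ f.eval y := hmono.monotoneOn (hmem x le_rfl hxz) (hmem y hxy hyz) hxy
        rw [Real.sign_of_pos (lt_of_lt_of_le hfx this), Real.sign_of_pos hfz]

theorem derivative_signs_determine_side {m : ℕ} (hm : 1 ≤ m)
    (f : Polynomial ℝ) (hmonic : f.Monic) (hdeg : f.natDegree = m)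
    (α β : ℝ) (hroot : f.eval α = 0)
    (hnoroot : ∀ x, α < x → f.eval x ≠ 0)
    (hβ : α < β) :
    ∀ x : ℝ,
      (∀ i < m, Real.sign ((Polynomial.derivative^[i] f).eval x)
              = Real.sign ((Polynomial.derivative^[i] f).eval β)) →
      x > α := by
  intro x hx
  by_contra hcon
  push_neg at hcon
  -- f(β) > 0
  have hdegpos : 0 < f.degree := by
    rw [← Polynomial.natDegree_pos_iff_degree_pos, hdeg]; omega
  have hlim := Polynomial.tendsto_atTop_of_leadingCoeff_nonneg f hdegpos
    (by rw [hmonic.leadingCoeff]; norm_num)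
  have hfβpos : 0 < f.eval β := by
    rcases lt_trichotomy (f.eval β) 0 with h | h | h
    · exfalso
      obtain ⟨t, ht⟩ := ((hlim.eventually_ge_atTop 1).and (Filter.eventually_ge_atTop β)).exists
      have hiv := intermediate_value_Icc ht.2 (f.continuousOn (s := Set.Icc β t))
      have h0 : (0 : ℝ) ∈ Set.Icc (f.eval β) (f.eval t) := ⟨h.le, by linarith [ht.1]⟩
      obtain ⟨c, hc, hc0⟩ := hiv h0
      exact hnoroot c (lt_of_lt_of_le hβ hc.1) hc0
    · exact absurd h (hnoroot β hβ)
    · exact h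
  -- sign conditions for all i
  have hall : ∀ i, Real.sign ((Polynomial.derivative^[i] f).eval x)
      = Real.sign ((Polynomial.derivative^[i] f).eval β) := by
    intro i
    by_cases hi : i < m
    · exact hx i hi
    · have h1 : (Polynomial.derivative^[i] f).natDegree = 0 := by
        have := Polynomial.natDegree_iterate_derivative f i
        omega
      rw [Polynomial.eq_C_of_natDegree_eq_zero h1]
      simp
  have := thom_key m f (le_of_eq hdeg) x β (le_trans hcon hβ.le) hall α hcon hβ.le
  rw [hroot, Real.sign_zero, Real.sign_of_pos hfβpos] at this
  norm_num at this
end
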